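/- Let φ be a flow on a compact metric space X. If φ is expansive on X \ Sing(φ), then Sing(φ) is dynamically isolated. -/

import Mathlib

open Set Metric Filter
open scoped Classical

variable {X : Type*}

/-- A (continuous) flow on a topological space, given as a map `φ : ℝ → X → X`. -/
def IsFlowMap [TopologicalSpace X] (φ : ℝ → X → X) : Prop :=
  Continuous (fun p : ℝ × X => φ p.1 p.2) ∧ (∀ x : X, φ 0 x = x) ∧
    ∀ t s : ℝ, ∀ x : X, φ (t + s) x = φ t (φ s x)

/-- The singular set of a flow. -/
def SingSet (φ : ℝ → X → X) : Set X := {x : X | ∀ t : ℝ, φ t x = x}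

/-- An increasing homeomorphism of `ℝ`: a strictly increasing continuous bijection. -/
def IncreasingHomeo (s : ℝ → ℝ) : Prop :=
  Continuous s ∧ StrictMono s ∧ Function.Bijective s

/-- Distance from a point to a set, with the convention that the distance
to the empty set is the diameter of the whole space. -/
noncomputable def distToSet [MetricSpace X] (z : X) (A : Set X) : ℝ :=
  if A = ∅ then Metric.diam (Set.univ : Set X) else Metric.infDist z A

/-- The orbit of a point under a flow. -/
def flowOrbit (φ : ℝ → X → X) (x : X) : Set X := Set.range fun t : ℝ => φ t x

/-- Bowen–Walters expansivity of a flow on a subset `Λ`. -/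
def ExpansiveOn [MetricSpace X] (φ : ℝ → X → X) (Λ : Set X) : Prop :=
  ∀ ε > (0:ℝ), ∃ δ > (0:ℝ), ∀ x ∈ Λ, ∀ y ∈ Λ, ∀ s : ℝ → ℝ, Continuous s → s 0 = 0 →
    (∀ t : ℝ, dist (φ t x) (φ (s t) y) ≤ δ) →
    ∃ τ ∈ Set.Icc (-ε) ε, y = φ τ x

/-- Komuro k*-expansivity of a flow on a subset `Λ`. -/
def KStarExpansiveOn [MetricSpace X] (φ : ℝ → X → X) (Λ : Set X) : Prop :=
  ∀ ε > (0:ℝ), ∃ δ > (0:ℝ), ∀ x ∈ Λ, ∀ y ∈ Λ, ∀ s : ℝ → ℝ,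
    IncreasingHomeo s → s 0 = 0 →
    (∀ t : ℝ, dist (φ t x) (φ (s t) y) ≤ δ) →
    ∃ t₀ : ℝ, ∃ τ ∈ Set.Icc (t₀ - ε) (t₀ + ε), φ (s t₀) y = φ τ x

/-- Singular expansivity of a flow on a subset `Λ`. -/
def SingularExpansiveOn [MetricSpace X] (φ : ℝ → X → X) (Λ : Set X) : Prop :=
  ∀ ε > (0:ℝ), ∃ δ > (0:ℝ), ∀ x ∈ Λ, ∀ y ∈ Λ, ∀ s : ℝ → ℝ, IncreasingHomeo s →
    (∀ t : ℝ, dist (φ t x) (φ (s t) y) ≤ δ * distToSet (φ t x) (SingSet φ)) →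
    ∃ t₀ : ℝ, ∃ τ ∈ Set.Icc (t₀ - ε) (t₀ + ε), φ (s t₀) y = φ τ x

/-- A periodic point of a flow: a nonsingular point with a positive period. -/
def IsPeriodicPoint (φ : ℝ → X → X) (x : X) : Prop :=
  x ∉ SingSet φ ∧ ∃ t : ℝ, 0 < t ∧ φ t x = x

/-- An invariant set `K` is dynamically isolated if it has a neighborhood `U`
with `K = ⋂_{t ∈ ℝ} φ_t(U)`. -/
def DynIsolated [TopologicalSpace X] (φ : ℝ → X → X) (K : Set X) : Prop :=
  ∃ U : Set X, K ⊆ interior U ∧ K = ⋂ t : ℝ, φ t '' U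

/-- Equicontinuity of a flow. -/
def EquicontinuousFlow [MetricSpace X] (φ : ℝ → X → X) : Prop :=
  ∀ ε > (0:ℝ), ∃ δ > (0:ℝ), ∀ x y : X, dist x y ≤ δ →
    ∀ t : ℝ, dist (φ t x) (φ t y) ≤ ε

/-- Singular equicontinuity of a flow. -/
def SingularEquicontinuous [MetricSpace X] (φ : ℝ → X → X) : Prop :=
  ∀ ε > (0:ℝ), ∃ δ > (0:ℝ), ∀ x y : X, dist x y ≤ δ * distToSet x (SingSet φ) →
    ∀ t : ℝ, dist (φ t x) (φ t y) ≤ ε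


theorem expansive_off_sing_implies_dyn_isolated
    [MetricSpace X] [CompactSpace X] (φ : ℝ → X → X) (hφ : IsFlowMap φ)
    (h : ExpansiveOn φ (SingSet φ)ᶜ) : DynIsolated φ (SingSet φ) := by
  obtain ⟨hcont, hzero, hadd⟩ := hφ
  have hct : ∀ t : ℝ, Continuous (φ t) := fun t =>
    hcont.comp (continuous_const.prodMk continuous_id)
  have hSclosed : IsClosed (SingSet φ) := by
    have he : SingSet φ = ⋂ t : ℝ, {x | φ t x = x} := by
      ext x; simp [SingSet, Set.mem_iInter]
    rw [he]
    exact isClosed_iInter fun t => isClosed_eq (hct t) continuous_id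
  by_cases hSne : (SingSet φ).Nonempty
  swap
  · refine ⟨∅, ?_, ?_⟩
    · intro x hx; exact absurd ⟨x, hx⟩ hSne
    · have he : SingSet φ = ∅ := Set.not_nonempty_iff_eq_empty.mp hSne
      rw [he]
      simp only [Set.image_empty]
      exact (Set.iInter_const ∅).symm
  -- basic flow algebra
  have hmemS : ∀ (t : ℝ) (x : X), φ t x ∈ SingSet φ → x ∈ SingSet φ := by
    intro t x hx
    have h1 : φ (-t + t) x = φ (-t) (φ t x) := hadd (-t) t x
    rw [neg_add_cancel, hzero, hx (-t)] at h1
    rw [h1]; exact hx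
  have hneg : ∀ (x : X) (p : ℝ), φ p x = x → φ (-p) x = x := by
    intro x p hp
    have h1 : φ (-p + p) x = φ (-p) (φ p x) := hadd (-p) p x
    rw [neg_add_cancel, hzero, hp] at h1
    exact h1.symm
  have hiter : ∀ (x : X) (p : ℝ), φ p x = x → ∀ k : ℤ, φ ((k : ℝ) * p) x = x := by
    intro x p hp k
    induction k using Int.induction_on with
    | zero => simpa using hzero x
    | succ n ih =>
        rw [show (((n : ℤ) + 1 : ℤ) : ℝ) * p = p + (((n : ℤ) : ℝ)) * p by push_cast; ring,
          hadd, ih, hp]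
    | pred n ih =>
        rw [show ((-(n : ℤ) - 1 : ℤ) : ℝ) * p = -p + (((-(n : ℤ) : ℤ)) : ℝ) * p by push_cast; ring,
          hadd, ih]
        exact hneg x p hp
  -- get expansivity constant for ε = 1
  obtain ⟨δ, hδpos, hδ⟩ := h 1 one_pos
  -- slow-motion lemma near the singular set
  have hL : ∃ r > (0:ℝ), ∀ z, infDist z (SingSet φ) < r →
      ∀ u ∈ Icc (-3:ℝ) 3, dist (φ u z) z ≤ δ / 4 := by
    set D : Set (ℝ × X) := {p | p.1 ∈ Icc (-3:ℝ) 3 ∧ δ / 4 ≤ dist (φ p.1 p.2) p.2} with hD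
    have hDclosed : IsClosed D := by
      apply IsClosed.inter
      · exact isClosed_Icc.preimage continuous_fst
      · exact isClosed_le continuous_const (hcont.dist continuous_snd)
    have hDcompact : IsCompact D :=
      (isCompact_Icc.prod isCompact_univ).of_isClosed_subset hDclosed
        (fun p hp => ⟨hp.1, Set.mem_univ _⟩)
    have hCcompact : IsCompact (Prod.snd '' D) := hDcompact.image continuous_snd
    rcases Set.eq_empty_or_nonempty (Prod.snd '' D) with hC | hC
    · refine ⟨1, one_pos, fun z _ u hu => ?_⟩
      by_contra hcon
      have : z ∈ Prod.snd '' D := ⟨(u, z), ⟨hu, le_of_not_ge hcon⟩, rfl⟩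
      rw [hC] at this
      exact this
    · obtain ⟨z₀, hz₀C, hz₀min⟩ := hCcompact.exists_isMinOn hC
        (Metric.continuous_infDist_pt (SingSet φ)).continuousOn
      have hz₀notS : z₀ ∉ SingSet φ := by
        intro hz₀S
        obtain ⟨⟨u, z⟩, ⟨hu, hd⟩, hz⟩ := hz₀C
        simp only at hz
        subst hz
        rw [hz₀S u, dist_self] at hd
        linarith
      have hpos : 0 < infDist z₀ (SingSet φ) := by
        rcases lt_or_eq_of_le (infDist_nonneg (x := z₀) (s := SingSet φ)) with h' | h'
        · exact h'
        · exact absurd ((hSclosed.mem_iff_infDist_zero hSne).mpr h'.symm) hz₀notS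
      refine ⟨infDist z₀ (SingSet φ), hpos, fun z hz u hu => ?_⟩
      by_contra hcon
      have hzC : z ∈ Prod.snd '' D := ⟨(u, z), ⟨hu, le_of_not_ge hcon⟩, rfl⟩
      exact absurd (isMinOn_iff.mp hz₀min z hzC) (not_le.mpr hz)
  obtain ⟨r₀, hr₀pos, hr₀⟩ := hL
  -- orbit diameter bound for periodic points near the singular set
  have horbit : ∀ (x : X) (p : ℝ), 0 < p → p ≤ 3 → φ p x = x →
      infDist x (SingSet φ) < r₀ → ∀ t : ℝ, dist (φ t x) x ≤ δ / 4 := by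
    intro x p hp hp3 hper hx t
    have h0 : (0:ℝ) ≤ t - (⌊t / p⌋ : ℝ) * p := Int.sub_floor_div_mul_nonneg t hp
    have h1 : t - (⌊t / p⌋ : ℝ) * p < p := Int.sub_floor_div_mul_lt t hp
    have heq : φ t x = φ (t - (⌊t / p⌋ : ℝ) * p) x := by
      conv_lhs => rw [show t = (t - (⌊t / p⌋ : ℝ) * p) + (⌊t / p⌋ : ℝ) * p by ring]
      rw [hadd, hiter x p hper ⌊t / p⌋]
    rw [heq]
    exact hr₀ x hx (t - (⌊t / p⌋ : ℝ) * p) ⟨by linarith, by linarith⟩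
  -- every nonsingular point whose orbit stays r₀-close to Sing has a period in [1,3]
  have hper : ∀ x : X, x ∉ SingSet φ → (∀ t, infDist (φ t x) (SingSet φ) < r₀) →
      ∃ p : ℝ, 1 ≤ p ∧ p ≤ 3 ∧ φ p x = x := by
    intro x hx hxr
    have h2x : φ 2 x ∉ SingSet φ := fun hc => hx (hmemS 2 x hc)
    have hbound : ∀ t : ℝ, dist (φ t x) (φ (id t) (φ 2 x)) ≤ δ := by
      intro t
      have e1 : φ (id t) (φ 2 x) = φ 2 (φ t x) := by
        simp only [id]
        rw [← hadd t 2 x, ← hadd 2 t x, add_comm]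
      rw [e1, dist_comm]
      have := hr₀ (φ t x) (hxr t) 2 ⟨by norm_num, by norm_num⟩
      linarith
    obtain ⟨τ, hτ, hyx⟩ := hδ x hx (φ 2 x) h2x id continuous_id rfl hbound
    refine ⟨2 - τ, by linarith [hτ.2], by linarith [hτ.1], ?_⟩
    have e2 : φ (2 - τ) x = φ (-τ) (φ 2 x) := by
      rw [show (2:ℝ) - τ = -τ + 2 by ring]
      exact hadd (-τ) 2 x
    rw [e2, hyx, ← hadd (-τ) τ x, neg_add_cancel, hzero]
  -- the key claim
  have key : ∃ r > (0:ℝ), ∀ x : X,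
      (∀ t, infDist (φ t x) (SingSet φ) < r) → x ∈ SingSet φ := by
    by_contra hcon
    push_neg at hcon
    have hseq : ∀ n : ℕ, ∃ x : X,
        (∀ t, infDist (φ t x) (SingSet φ) < min r₀ (1 / (n + 1))) ∧ x ∉ SingSet φ :=
      fun n => hcon (min r₀ (1 / (n + 1))) (lt_min hr₀pos (by positivity))
    choose xseq hx1 hx2 using hseq
    have horbn : ∀ n : ℕ, ∀ t : ℝ, dist (φ t (xseq n)) (xseq n) ≤ δ / 4 := by
      intro n
      obtain ⟨p, hp1, hp3, hpp⟩ := hper (xseq n) (hx2 n)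
        (fun t => (hx1 n t).trans_le (min_le_left _ _))
      have hx0 : infDist (xseq n) (SingSet φ) < r₀ := by
        have h0 := (hx1 n 0).trans_le (min_le_left _ _)
        rwa [hzero] at h0
      exact horbit (xseq n) p (by linarith) hp3 hpp hx0
    obtain ⟨σp, -, g, hg, hgt⟩ := isCompact_univ.tendsto_subseq
      (fun n : ℕ => Set.mem_univ (xseq n))
    obtain ⟨N, hN⟩ := Metric.tendsto_atTop.mp hgt (δ / 8) (by positivity)
    have hle : ∀ k : ℕ, N ≤ k → infDist (xseq (g N)) (SingSet φ) < 1 / (g k + 1) := by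
      intro k hk
      have hclose : dist (xseq (g N)) (xseq (g k)) ≤ δ / 4 := by
        have h1 := hN N le_rfl
        have h2 := hN k hk
        calc dist (xseq (g N)) (xseq (g k))
            ≤ dist ((xseq ∘ g) N) σp + dist σp ((xseq ∘ g) k) := dist_triangle _ _ _
          _ ≤ δ / 8 + δ / 8 := by
              rw [dist_comm σp]
              exact add_le_add h1.le h2.le
          _ = δ / 4 := by ring
      have hbound : ∀ t : ℝ, dist (φ t (xseq (g N))) (φ (id t) (xseq (g k))) ≤ δ := by
        intro t
        simp only [id]
        have ha := horbn (g N) t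
        have hb := horbn (g k) t
        calc dist (φ t (xseq (g N))) (φ t (xseq (g k)))
            ≤ dist (φ t (xseq (g N))) (xseq (g N)) + dist (xseq (g N)) (xseq (g k))
              + dist (xseq (g k)) (φ t (xseq (g k))) := dist_triangle4 _ _ _ _
          _ ≤ δ / 4 + δ / 4 + δ / 4 := by
              rw [dist_comm (xseq (g k))]
              exact add_le_add (add_le_add ha hclose) hb
          _ ≤ δ := by linarith
      obtain ⟨τ, hτ, heq⟩ := hδ (xseq (g N)) (hx2 (g N)) (xseq (g k)) (hx2 (g k))
        id continuous_id rfl hbound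
      have hxn : xseq (g N) = φ (-τ) (xseq (g k)) := by
        rw [heq, ← hadd (-τ) τ (xseq (g N)), neg_add_cancel, hzero]
      rw [hxn]
      exact (hx1 (g k) (-τ)).trans_le (min_le_right _ _)
    have hid : infDist (xseq (g N)) (SingSet φ) = 0 := by
      by_contra hne
      have hpos : 0 < infDist (xseq (g N)) (SingSet φ) :=
        lt_of_le_of_ne (infDist_nonneg) (Ne.symm hne)
      obtain ⟨k, hk⟩ := exists_nat_one_div_lt hpos
      have h1 := hle (max k N) (le_max_right _ _)
      have hgk : (k : ℝ) + 1 ≤ (g (max k N) : ℝ) + 1 := by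
        have hkk : k ≤ g (max k N) := le_trans (le_max_left k N) hg.le_apply
        exact_mod_cast Nat.succ_le_succ hkk
      have h2 : (1 : ℝ) / (g (max k N) + 1) ≤ 1 / (k + 1) :=
        one_div_le_one_div_of_le (by positivity) hgk
      linarith
    exact hx2 (g N) ((hSclosed.mem_iff_infDist_zero hSne).mpr hid)
  -- assemble DynIsolated
  obtain ⟨r, hrpos, hkey⟩ := key
  have hUopen : IsOpen {z : X | infDist z (SingSet φ) < r} :=
    isOpen_lt (Metric.continuous_infDist_pt (SingSet φ)) continuous_const
  refine ⟨{z : X | infDist z (SingSet φ) < r}, ?_, ?_⟩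
  · intro x hx
    rw [hUopen.interior_eq]
    show infDist x (SingSet φ) < r
    rw [infDist_zero_of_mem hx]
    exact hrpos
  · ext z
    constructor
    · intro hz
      refine Set.mem_iInter.mpr fun t => ⟨z, ?_, hz t⟩
      show infDist z (SingSet φ) < r
      rw [infDist_zero_of_mem hz]
      exact hrpos
    · intro hz
      apply hkey
      intro t
      obtain ⟨w, hw, hwt⟩ := Set.mem_iInter.mp hz (-t)
      have he : φ t z = w := by
        rw [← hwt, ← hadd t (-t) w, add_neg_cancel, hzero]
      rwa [he]
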